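/- Let G(n) = ∑_{i=0}^{⌊(n+1)/2⌋} ∑_{j=0}^{i} (-1)^{i-j} · C(n, 2i+1) · C(i, j). For every natural number s ≥ 1, the ratio of partial sums (∑_{n=1}^{k} G(n)^{2s} / ((sin²n) · n^{2s+3})) / (∑_{n=1}^{k} 1 / ((sin²n) · n³)) tends to 1 as k → ∞. In other words, the partial sums of the flint hill series ∑_{n≥1} 1/((sin²n) n³) and of the modified series ∑_{n≥1} G(n)^{2s}/((sin²n) n^{2s+3}) are asymptotically equivalent for every s ≥ 1. -/

import Mathlib

open Filter

/-- `G(n) = ∑_{i=0}^{⌊(n+1)/2⌋} ∑_{j=0}^{i} (-1)^(i-j) C(n,2i+1) C(i,j)`. -/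
def flintG (n : ℕ) : ℤ :=
  ∑ i ∈ Finset.range ((n + 1) / 2 + 1), ∑ j ∈ Finset.range (i + 1),
    (-1 : ℤ) ^ (i - j) * (n.choose (2 * i + 1) : ℤ) * (i.choose j : ℤ)

lemma flintG_eq (n : ℕ) : flintG n = n := by
  unfold flintG
  have key : ∀ i : ℕ, (∑ j ∈ Finset.range (i + 1),
      (-1 : ℤ) ^ (i - j) * (n.choose (2 * i + 1) : ℤ) * (i.choose j : ℤ))
      = if i = 0 then (n.choose 1 : ℤ) else 0 := by
    intro i
    have h1 : (∑ j ∈ Finset.range (i + 1),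
        (-1 : ℤ) ^ (i - j) * (n.choose (2 * i + 1) : ℤ) * (i.choose j : ℤ))
        = (n.choose (2 * i + 1) : ℤ) * ∑ j ∈ Finset.range (i + 1),
            (-1 : ℤ) ^ (i - j) * (i.choose j : ℤ) := by
      rw [Finset.mul_sum]; apply Finset.sum_congr rfl; intro j _; ring
    have h2 : (∑ j ∈ Finset.range (i + 1), (-1 : ℤ) ^ (i - j) * (i.choose j : ℤ))
        = ∑ j ∈ Finset.range (i + 1), (-1 : ℤ) ^ j * (i.choose j : ℤ) := by
      rw [← Finset.sum_range_reflect]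
      apply Finset.sum_congr rfl
      intro j hj
      simp only [Finset.mem_range] at hj
      have hj' : j ≤ i := Nat.lt_succ_iff.mp hj
      have e1 : i + 1 - 1 - j = i - j := by omega
      rw [e1, Nat.sub_sub_self hj', Nat.choose_symm hj']
    have h3 : (∑ j ∈ Finset.range (i + 1), (-1 : ℤ) ^ j * (i.choose j : ℤ))
        = if i = 0 then 1 else 0 := by
      have := Int.alternating_sum_range_choose (n := i)
      rcases Nat.eq_zero_or_pos i with h | h
      · subst h; simp
      · rw [if_neg (by omega)]
        rw [Int.alternating_sum_range_choose_of_ne (by omega)] at *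
    rw [h1, h2, h3]
    rcases Nat.eq_zero_or_pos i with h | h
    · subst h; simp
    · rw [if_neg (by omega), if_neg (by omega), mul_zero]
  rw [Finset.sum_congr rfl (fun i _ => key i)]
  rw [Finset.sum_ite_eq' (Finset.range ((n + 1) / 2 + 1)) 0 (fun _ => (n.choose 1 : ℤ))]
  simp

/-- The partial sums of the flint hill series and of the modified series
`∑ G(n)^(2s)/((sin² n) n^(2s+3))` are asymptotically equivalent for every `s ≥ 1`. -/
theorem flint_hill_partial_sums_asymptotic (s : ℕ) (hs : 1 ≤ s) :
    Tendsto
      (fun k : ℕ =>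
        (∑ n ∈ Finset.Icc 1 k, (flintG n : ℝ) ^ (2 * s) / (Real.sin n ^ 2 * (n : ℝ) ^ (2 * s + 3))) /
          (∑ n ∈ Finset.Icc 1 k, 1 / (Real.sin n ^ 2 * (n : ℝ) ^ 3)))
      atTop (nhds 1) := by
  have hsin : ∀ n : ℕ, 1 ≤ n → Real.sin n ≠ 0 := by
    intro n hn h
    rw [Real.sin_eq_zero_iff] at h
    obtain ⟨m, hm⟩ := h
    have : (n : ℝ) ≠ 0 := by positivity
    have hm0 : m ≠ 0 := by rintro rfl; simp at hm; exact this hm.symm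
    have : Irrational Real.pi := irrational_pi
    have : Real.pi = (n : ℝ) / (m : ℝ) := by
      field_simp at hm ⊢
      linarith [hm]
    exact irrational_pi.ne_rat ((n : ℚ) / (m : ℚ)) (by push_cast [this]; norm_num)
  have hterm : ∀ n : ℕ, 1 ≤ n →
      (flintG n : ℝ) ^ (2 * s) / (Real.sin n ^ 2 * (n : ℝ) ^ (2 * s + 3))
        = 1 / (Real.sin n ^ 2 * (n : ℝ) ^ 3) := by
    intro n hn
    rw [flintG_eq]
    have hn0 : (n : ℝ) ≠ 0 := by positivity
    have hs0 : Real.sin n ≠ 0 := hsin n hn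
    push_cast
    rw [pow_add]
    field_simp
  have heq : ∀ k : ℕ,
      (∑ n ∈ Finset.Icc 1 k, (flintG n : ℝ) ^ (2 * s) / (Real.sin n ^ 2 * (n : ℝ) ^ (2 * s + 3)))
        = ∑ n ∈ Finset.Icc 1 k, 1 / (Real.sin n ^ 2 * (n : ℝ) ^ 3) := by
    intro k
    apply Finset.sum_congr rfl
    intro n hn
    exact hterm n (Finset.mem_Icc.mp hn).1
  have hpos : ∀ k : ℕ, 1 ≤ k → 0 < ∑ n ∈ Finset.Icc 1 k, 1 / (Real.sin n ^ 2 * (n : ℝ) ^ 3) := by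
    intro k hk
    apply Finset.sum_pos
    · intro n hn
      obtain ⟨h1, _⟩ := Finset.mem_Icc.mp hn
      have : Real.sin n ≠ 0 := hsin n h1
      have : 0 < Real.sin n ^ 2 := by positivity
      have : (0 : ℝ) < n := by exact_mod_cast h1
      positivity
    · exact ⟨1, Finset.mem_Icc.mpr ⟨le_refl 1, hk⟩⟩
  have hev : ∀ᶠ k in atTop, (fun k : ℕ =>
        (∑ n ∈ Finset.Icc 1 k, (flintG n : ℝ) ^ (2 * s) / (Real.sin n ^ 2 * (n : ℝ) ^ (2 * s + 3))) /
          (∑ n ∈ Finset.Icc 1 k, 1 / (Real.sin n ^ 2 * (n : ℝ) ^ 3))) k = 1 := by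
    filter_upwards [eventually_ge_atTop 1] with k hk
    rw [heq k, div_self (ne_of_gt (hpos k hk))]
  rw [tendsto_congr' hev]
  exact tendsto_const_nhds
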